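/- Let d > 1 and let K₀ be a real number with K₀ > 4·(d − 1 − ln d − (1/2)·(ln d)²). Define Disc := 8·d·(ln d)² − 8·(d − 1)² + 4·(d − 1)·K₀ and c := (−2√2·(d·ln d − d + 1) − √Disc)/(2·(d − 1)). Then Disc > 0, c < −√2·ln d, and consequently 2√2·c/x + 4·(ln x)/x < 0 for all x ∈ [1, d]. -/

import Mathlib

theorem stmt_14 (d K₀ : ℝ) (hd : 1 < d)
    (hK₀ : K₀ > 4 * (d - 1 - Real.log d - (1 / 2) * (Real.log d) ^ 2))
    (Disc c : ℝ)
    (hDisc : Disc = 8 * d * (Real.log d) ^ 2 - 8 * (d - 1) ^ 2 + 4 * (d - 1) * K₀)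
    (hc : c = (-(2 * Real.sqrt 2) * (d * Real.log d - d + 1) - Real.sqrt Disc)
        / (2 * (d - 1))) :
    Disc > 0 ∧
    c < -(Real.sqrt 2) * Real.log d ∧
    ∀ x ∈ Set.Icc (1 : ℝ) d, 2 * Real.sqrt 2 * c / x + 4 * Real.log x / x < 0 := by
  set L := Real.log d with hL
  have hd0 : (0:ℝ) < d := lt_trans one_pos hd
  have hL0 : 0 < L := Real.log_pos hd
  have hLd : L < d - 1 := by
    have := Real.log_lt_sub_one_of_pos hd0 (ne_of_gt hd)
    linarith
  have hDpos : Disc > 8 * (d - 1 - L)^2 := by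
    rw [hDisc]; nlinarith [hK₀, hd]
  have hDisc0 : Disc > 0 := by nlinarith [sq_nonneg (d - 1 - L)]
  have s2 : Real.sqrt 2 ^ 2 = 2 := Real.sq_sqrt (by norm_num)
  have s2p : 0 < Real.sqrt 2 := Real.sqrt_pos.mpr (by norm_num)
  have sD : Real.sqrt Disc ^ 2 = Disc := Real.sq_sqrt hDisc0.le
  have sDn : 0 ≤ Real.sqrt Disc := Real.sqrt_nonneg _
  have key : 2 * Real.sqrt 2 * (d - 1 - L) < Real.sqrt Disc := by
    nlinarith [sq_nonneg (Real.sqrt Disc - 2 * Real.sqrt 2 * (d - 1 - L)),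
      sq_nonneg (Real.sqrt Disc + 2 * Real.sqrt 2 * (d - 1 - L))]
  have hcL : c < -(Real.sqrt 2) * L := by
    rw [hc, div_lt_iff₀ (by linarith : (0:ℝ) < 2 * (d - 1))]
    nlinarith [key]
  refine ⟨hDisc0, hcL, ?_⟩
  intro x hx
  obtain ⟨hx1, hxd⟩ := hx
  have hx0 : (0:ℝ) < x := by linarith
  have hlogx : Real.log x ≤ L := by
    rw [hL]; exact Real.log_le_log hx0 hxd
  have hnum : 2 * Real.sqrt 2 * c + 4 * Real.log x < 0 := by nlinarith [hcL, s2p, hL0]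
  rw [← add_div]
  exact div_neg_of_neg_of_pos hnum hx0
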